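/- For every constant κ ∈ (0, 1/2) there exist c > 0 and n₀ such that the following holds for every multiple of 4, n ≥ n₀, every M ⊆ [n] with |M| = n/2, every P ⊆ Ψ_M with |P| = |Ψ_M|/2, and every completion F of the D⁻ instance determined by (M, P): for every coordinate i ∈ M and every function g : {0,1}^n → {0,1} that does not depend on coordinate i, |{x ∈ {0,1}^n : F(x) ≠ g(x)}| / 2^n ≥ c/√n. -/

import Mathlib

open Finset

attribute [local instance] Classical.propDecidable

variable {n : ℕ}

/-- The edge of the hypercube along dimension `i` at `x` (the pair
`{x^{(i→0)}, x^{(i→1)}}`) is decreasing for `f`. -/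
def decEdge (f : (Fin n → Bool) → Bool) (x : Fin n → Bool) (i : Fin n) : Prop :=
  f (Function.update x i false) = true ∧ f (Function.update x i true) = false

/-- `x` with its `i`-th coordinate flipped. -/
def flipC (x : Fin n → Bool) (i : Fin n) : Fin n → Bool := Function.update x i (!(x i))

/-- `g` is monotone. -/
def monoB (g : (Fin n → Bool) → Bool) : Prop :=
  ∀ x y : Fin n → Bool, (∀ i, x i ≤ y i) → g x ≤ g y

/-- Distance of `f` to the set of monotone functions. -/
noncomputable def distMono (f : (Fin n → Bool) → Bool) : ℝ :=
  sInf {d : ℝ | ∃ g : (Fin n → Bool) → Bool, monoB g ∧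
    d = ((univ.filter fun x => f x ≠ g x).card : ℝ) / 2 ^ n}

/-- `I_f⁻(x)`: the number of decreasing edges of `f` incident on `x`. -/
noncomputable def Iminus (f : (Fin n → Bool) → Bool) (x : Fin n → Bool) : ℕ :=
  (univ.filter fun i => decEdge f x i).card

/-- The number of decreasing edges of `f` (each edge represented by its lower
endpoint together with its dimension). -/
noncomputable def numDecEdges (f : (Fin n → Bool) → Bool) : ℕ :=
  (univ.filter fun q : (Fin n → Bool) × Fin n => q.1 q.2 = false ∧ decEdge f q.1 q.2).card

/-- The event Capture(x, S, f). -/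
def Capture (f : (Fin n → Bool) → Bool) (S : Finset (Fin n)) (x : Fin n → Bool) : Prop :=
  ∃ i ∈ S, decEdge f x i ∧ ∀ j ∈ S \ {i}, ¬ decEdge f (flipC x i) j

/-- Hamming weight of `x` restricted to the coordinates in `M`. -/
noncomputable def wt (M : Finset (Fin n)) (x : Fin n → Bool) : ℕ :=
  (M.filter fun i => x i = true).card

/-- `g` is unate. -/
def unate (g : (Fin n → Bool) → Bool) : Prop :=
  ∃ σ : Fin n → Bool, monoB (fun x => g (fun i => xor (x i) (σ i)))

/-- Distance of `f` to the set of unate functions. -/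
noncomputable def distUnate (f : (Fin n → Bool) → Bool) : ℝ :=
  sInf {d : ℝ | ∃ g : (Fin n → Bool) → Bool, unate g ∧
    d = ((univ.filter fun x => f x ≠ g x).card : ℝ) / 2 ^ n}

/-- `g` is a `k`-junta. -/
def isJunta (k : ℕ) (g : (Fin n → Bool) → Bool) : Prop :=
  ∃ J : Finset (Fin n), J.card ≤ k ∧
    ∀ x y : Fin n → Bool, (∀ i ∈ J, x i = y i) → g x = g y

/-- Distance of `f` to the set of `k`-juntas. -/
noncomputable def distJunta (k : ℕ) (f : (Fin n → Bool) → Bool) : ℝ :=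
  sInf {d : ℝ | ∃ g : (Fin n → Bool) → Bool, isJunta k g ∧
    d = ((univ.filter fun x => f x ≠ g x).card : ℝ) / 2 ^ n}

/-- `I⁻_{f,red}(x)` for the coloring `col` (an edge is identified by its lower
endpoint along its dimension; `col e i = true` means the edge along dimension `i`
at `e` is red). -/
noncomputable def IredCol (f : (Fin n → Bool) → Bool)
    (col : (Fin n → Bool) → Fin n → Bool) (x : Fin n → Bool) : ℕ :=
  if f x = true then
    (univ.filter fun i => decEdge f x i ∧ col (Function.update x i false) i = true).card
  else 0

/-- `I⁻_{f,blue}(x)` for the coloring `col`. -/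
noncomputable def IblueCol (f : (Fin n → Bool) → Bool)
    (col : (Fin n → Bool) → Fin n → Bool) (x : Fin n → Bool) : ℕ :=
  if f x = false then
    (univ.filter fun i => decEdge f x i ∧ col (Function.update x i false) i = false).card
  else 0

/-- `Ψ_M`: the middle layer of the subcube `{0,1}^M`. -/
noncomputable def PsiSet (M : Finset (Fin n)) : Finset (↥M → Bool) :=
  univ.filter fun z => (univ.filter fun i : ↥M => z i = true).card = n / 4

/-- `x` is an erased point (for parameter `κ` and control set `M`). -/
def ErasedPt (κ : ℝ) (M : Finset (Fin n)) (x : Fin n → Bool) : Prop :=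
  wt M x = n / 4 ∧ |(wt Mᶜ x : ℝ) - (n : ℝ) / 4| ≤ (n : ℝ) ^ κ

/-- `Maj(x_{M̄})`: majority on the coordinates outside `M`. -/
noncomputable def MajBar (M : Finset (Fin n)) (x : Fin n → Bool) : Bool :=
  decide (n / 4 < wt Mᶜ x)

/-- `F` is a completion of the `D⁻` instance determined by `(M, P)`. -/
def DminusCompletion (κ : ℝ) (M : Finset (Fin n)) (P : Finset (↥M → Bool))
    (F : (Fin n → Bool) → Bool) : Prop :=
  (∀ x, wt M x < n / 4 → F x = false) ∧
  (∀ x, n / 4 < wt M x → F x = true) ∧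
  (∀ x, wt M x = n / 4 → ¬ ErasedPt κ M x →
    F x = if (fun i : ↥M => x i.1) ∈ P then MajBar M x else !(MajBar M x))

/-- The function `F` of Statement 12: `F(x) = 1` iff `|x_M| > n/4`, or
`|x_M| = n/4` and `x_M ∉ P`. -/
noncomputable def DplusF (M : Finset (Fin n)) (P : Finset (↥M → Bool))
    (x : Fin n → Bool) : Bool :=
  if n / 4 < wt M x then true
  else if wt M x = n / 4 ∧ (fun i : ↥M => x i.1) ∉ P then true
  else false


section Wside
variable {α : Type*} [Fintype α]

noncomputable def wgtA (w : α → Bool) : ℕ := (univ.filter fun j => w j = true).card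

def negA (w : α → Bool) : α → Bool := fun j => !(w j)

lemma negA_negA (w : α → Bool) : negA (negA w) = w := by
  funext j; simp [negA]

lemma wgtA_le (w : α → Bool) : wgtA w ≤ Fintype.card α := by
  classical
  calc wgtA w ≤ (univ : Finset α).card := Finset.card_filter_le _ _
    _ = _ := Finset.card_univ

lemma wgtA_negA (w : α → Bool) : wgtA (negA w) = Fintype.card α - wgtA w := by
  classical
  have h : (univ.filter fun j => negA w j = true) = univ \ (univ.filter fun j => w j = true) := by
    ext j; simp [negA]
  unfold wgtA
  rw [Finset.filter_congr_decidable] at *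
  rw [h, Finset.card_sdiff_of_subset (Finset.filter_subset _ _), Finset.card_univ]

lemma layerA_card (k : ℕ) :
    (univ.filter fun w : α → Bool => wgtA w = k).card = (Fintype.card α).choose k := by
  classical
  rw [← Finset.card_univ, ← Finset.card_powersetCard]
  apply Finset.card_bij (fun (w : α → Bool) _ => univ.filter fun j => w j = true)
  · intro w hw
    rw [Finset.mem_powersetCard]
    exact ⟨Finset.filter_subset _ _, by simpa [wgtA] using (Finset.mem_filter.mp hw).2⟩
  · intro w hw w' hw' h
    funext j
    have : j ∈ univ.filter (fun j => w j = true) ↔ j ∈ univ.filter fun j => w' j = true := by rw [h]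
    simp only [Finset.mem_filter, Finset.mem_univ, true_and] at this
    cases hwj : w j <;> cases hwj' : w' j <;> simp_all
  · intro s hs
    rw [Finset.mem_powersetCard] at hs
    refine ⟨fun j => decide (j ∈ s), by simp [wgtA, ← hs.2], ?_⟩
    · congr 1
      ext j
      simp
end Wside
section Wside2
variable {α : Type*} [Fintype α]

noncomputable def WtA (a : ℕ) (r : ℝ) : Finset (α → Bool) :=
  univ.filter fun w => a < wgtA w ∧ r < |(wgtA w : ℝ) - a|

noncomputable def WfA (a : ℕ) (r : ℝ) : Finset (α → Bool) :=
  univ.filter fun w => wgtA w < a ∧ r < |(wgtA w : ℝ) - a|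

lemma negA_mem_WfA {a : ℕ} {r : ℝ} (h2a : Fintype.card α = 2 * a) {w : α → Bool}
    (hw : w ∈ WtA a r) : negA w ∈ WfA a r := by
  rw [WtA, Finset.mem_filter] at hw
  obtain ⟨-, h1, h2⟩ := hw
  have hle : wgtA w ≤ 2 * a := h2a ▸ wgtA_le w
  have hneg : wgtA (negA w) = 2 * a - wgtA w := by rw [wgtA_negA, h2a]
  rw [WfA, Finset.mem_filter]
  refine ⟨Finset.mem_univ _, ?_, ?_⟩
  · omega
  · have hc : ((wgtA (negA w)) : ℝ) = 2 * a - wgtA w := by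
      rw [hneg, Nat.cast_sub hle]; push_cast; ring
    rw [hc]
    have : |2 * (a:ℝ) - wgtA w - a| = |(wgtA w : ℝ) - a| := by
      rw [abs_sub_comm]; congr 1; ring
    rw [this]; exact h2
lemma negA_mem_WtA {a : ℕ} {r : ℝ} (h2a : Fintype.card α = 2 * a) {w : α → Bool}
    (hw : w ∈ WfA a r) : negA w ∈ WtA a r := by
  rw [WfA, Finset.mem_filter] at hw
  obtain ⟨-, h1, h2⟩ := hw
  have hle : wgtA w ≤ 2 * a := h2a ▸ wgtA_le w
  have hneg : wgtA (negA w) = 2 * a - wgtA w := by rw [wgtA_negA, h2a]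
  rw [WtA, Finset.mem_filter]
  refine ⟨Finset.mem_univ _, ?_, ?_⟩
  · omega
  · have hc : ((wgtA (negA w)) : ℝ) = 2 * a - wgtA w := by
      rw [hneg, Nat.cast_sub hle]; push_cast; ring
    rw [hc]
    have : |2 * (a:ℝ) - wgtA w - a| = |(wgtA w : ℝ) - a| := by
      rw [abs_sub_comm]; congr 1; ring
    rw [this]; exact h2

lemma WtA_card_eq_WfA {a : ℕ} {r : ℝ} (h2a : Fintype.card α = 2 * a) :
    (WtA (α := α) a r).card = (WfA (α := α) a r).card := by
  apply Finset.card_bij (s := WtA (α := α) a r) (t := WfA (α := α) a r) (fun (w : α → Bool) _ => negA w)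
  · intro w hw; exact negA_mem_WfA h2a hw
  · intro w _ w' _ h
    have := congrArg negA h
    rwa [negA_negA, negA_negA] at this
  · intro w hw
    exact ⟨negA w, negA_mem_WtA h2a hw, negA_negA w⟩

lemma band_card_le {a : ℕ} {r : ℝ} (hr : 0 ≤ r) (h2a : Fintype.card α = 2 * a) :
    ((univ : Finset (α → Bool)).filter fun w => ¬ r < |(wgtA w : ℝ) - a|).card
      ≤ (2 * ⌈r⌉₊ + 1) * Nat.centralBinom a := by
  classical
  set T := ⌈r⌉₊ with hT
  have hsub : ((univ : Finset (α → Bool)).filter fun w => ¬ r < |(wgtA w : ℝ) - a|)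
      ⊆ (Finset.Icc (a - T) (a + T)).biUnion fun k => univ.filter fun w => wgtA w = k := by
    intro w hw
    rw [Finset.mem_filter, not_lt] at hw
    have habs := hw.2
    have hTr : r ≤ (T : ℝ) := Nat.le_ceil r
    have h1 : ((wgtA w : ℝ)) - a ≤ T := le_trans (le_trans (le_abs_self _) habs) hTr
    have h2 : ((a : ℝ)) - wgtA w ≤ T := le_trans (le_trans (by rw [abs_sub_comm] at habs ⊢; exact le_abs_self _) habs) hTr
    have h1' : wgtA w ≤ a + T := by exact_mod_cast (by push_cast; linarith : ((wgtA w : ℝ)) ≤ a + T)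
    have h2' : a ≤ wgtA w + T := by exact_mod_cast (by push_cast; linarith : ((a : ℝ)) ≤ wgtA w + T)
    rw [Finset.mem_biUnion]
    exact ⟨wgtA w, Finset.mem_Icc.mpr ⟨by omega, h1'⟩, Finset.mem_filter.mpr ⟨Finset.mem_univ _, rfl⟩⟩
  calc _ ≤ ((Finset.Icc (a - T) (a + T)).biUnion fun k => univ.filter fun w : α → Bool => wgtA w = k).card :=
        Finset.card_le_card hsub
    _ ≤ ∑ k ∈ Finset.Icc (a - T) (a + T), (univ.filter fun w : α → Bool => wgtA w = k).card :=
        Finset.card_biUnion_le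
    _ ≤ ∑ _k ∈ Finset.Icc (a - T) (a + T), Nat.centralBinom a := by
        apply Finset.sum_le_sum
        intro k _
        rw [layerA_card, h2a]
        calc (2*a).choose k ≤ (2*a).choose ((2*a)/2) := Nat.choose_le_middle k (2*a)
          _ = Nat.centralBinom a := by rw [Nat.centralBinom]; congr 1; omega
    _ ≤ (2 * T + 1) * Nat.centralBinom a := by
        rw [Finset.sum_const, smul_eq_mul]
        apply Nat.mul_le_mul_right
        rw [Nat.card_Icc]
        omega

lemma WtA_count {a : ℕ} {r : ℝ} (hr : 0 ≤ r) (h2a : Fintype.card α = 2 * a) :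
    2 ^ (2 * a) ≤ 2 * (WtA a r : Finset (α → Bool)).card
      + (2 * ⌈r⌉₊ + 1) * Nat.centralBinom a := by
  classical
  set band := ((univ : Finset (α → Bool)).filter fun w => ¬ r < |(wgtA w : ℝ) - a|) with hband
  have hsplit : (univ : Finset (α → Bool)) = band ∪ (WtA a r ∪ WfA a r) := by
    refine (Finset.eq_univ_of_forall ?_).symm
    intro w
    simp only [hband, Finset.mem_union, Finset.mem_filter, Finset.mem_univ, true_and, WtA, WfA]
    by_cases h : r < |(wgtA w : ℝ) - a|
    · right
      have hne : wgtA w ≠ a := by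
        intro he
        rw [he] at h
        simp at h
        linarith
      rcases Nat.lt_or_ge (wgtA w) a with h' | h'
      · right; exact ⟨h', h⟩
      · left; exact ⟨lt_of_le_of_ne h' (Ne.symm hne), h⟩
    · left; exact h
  have hcard : 2 ^ (2 * a) = (univ : Finset (α → Bool)).card := by
    rw [Finset.card_univ, Fintype.card_fun, Fintype.card_bool, h2a]
  have h1 : (band ∪ (WtA a r ∪ WfA a r)).card ≤ band.card + ((WtA a r).card + (WfA a r).card) :=
    le_trans (Finset.card_union_le _ _)
      (Nat.add_le_add_left (Finset.card_union_le _ _) _)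
  have h2 : (WfA a r : Finset (α → Bool)).card = (WtA a r).card := (WtA_card_eq_WfA h2a).symm
  have h3 := band_card_le (α := α) hr h2a
  rw [← hband] at h3
  rw [hcard, hsplit]
  omega
end Wside2

lemma flipC_flipC {n : ℕ} (x : Fin n → Bool) (i : Fin n) : flipC (flipC x i) i = x := by
  funext j
  rcases eq_or_ne j i with rfl | h
  · simp [flipC, Function.update_self]
  · simp [flipC, Function.update_apply, h]

lemma wt_flipC_true {n : ℕ} {M : Finset (Fin n)} {i : Fin n} (hi : i ∈ M)
    {x : Fin n → Bool} (hx : x i = true) : wt M (flipC x i) + 1 = wt M x := by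
  have hf : flipC x i = Function.update x i false := by rw [flipC, hx]; rfl
  have hfil : (M.filter fun j => Function.update x i false j = true)
      = (M.filter fun j => x j = true).erase i := by
    ext j
    rcases eq_or_ne j i with rfl | h
    · simp [Function.update_self]
    · simp [Function.update_apply, h, Finset.mem_erase]
  rw [wt, wt, hf, hfil]
  exact Finset.card_erase_add_one (Finset.mem_filter.mpr ⟨hi, hx⟩)

lemma wt_flipC_false {n : ℕ} {M : Finset (Fin n)} {i : Fin n} (hi : i ∈ M)
    {x : Fin n → Bool} (hx : x i = false) : wt M (flipC x i) = wt M x + 1 := by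
  have hf : flipC x i = Function.update x i true := by rw [flipC, hx]; rfl
  have hfil : (M.filter fun j => Function.update x i true j = true)
      = insert i (M.filter fun j => x j = true) := by
    ext j
    rcases eq_or_ne j i with rfl | h
    · simp [Function.update_self, hi]
    · simp [Function.update_apply, h]
  rw [wt, wt, hf, hfil]
  rw [Finset.card_insert_of_notMem (by simp [hx])]

lemma wt_eq_subtype {n : ℕ} (M : Finset (Fin n)) (x : Fin n → Bool) :
    wt M x = (univ.filter fun iM : {j // j ∈ M} => x iM.1 = true).card := by
  rw [wt]
  apply Finset.card_bij
    (fun (j : Fin n) (hj : j ∈ M.filter fun k => x k = true) =>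
      (⟨j, (Finset.mem_filter.mp hj).1⟩ : {j // j ∈ M}))
  · intro j hj
    simp [Finset.mem_filter, (Finset.mem_filter.mp hj).2]
  · intro j hj j' hj' h
    exact congrArg Subtype.val h
  · intro iM hiM
    exact ⟨iM.1, Finset.mem_filter.mpr ⟨iM.2, (Finset.mem_filter.mp hiM).2⟩, rfl⟩

lemma wtc_eq_subtype {n : ℕ} (M : Finset (Fin n)) (x : Fin n → Bool) :
    wt Mᶜ x = (univ.filter fun jc : {j // ¬ j ∈ M} => x jc.1 = true).card := by
  rw [wt]
  apply Finset.card_bij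
    (fun (j : Fin n) (hj : j ∈ Mᶜ.filter fun k => x k = true) =>
      (⟨j, by simpa using (Finset.mem_filter.mp hj).1⟩ : {j // ¬ j ∈ M}))
  · intro j hj
    simp [Finset.mem_filter, (Finset.mem_filter.mp hj).2]
  · intro j hj j' hj' h
    exact congrArg Subtype.val h
  · intro jc hjc
    exact ⟨jc.1, Finset.mem_filter.mpr ⟨by simpa using jc.2, (Finset.mem_filter.mp hjc).2⟩, rfl⟩

lemma card_coe_compl {n : ℕ} (M : Finset (Fin n)) :
    Fintype.card {j : Fin n // ¬ j ∈ M} = n - M.card := by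
  rw [Fintype.card_subtype_compl]
  simp [Fintype.card_coe]


lemma cb_rec (a : ℕ) : (Nat.centralBinom (a+1) : ℝ) = 2*(2*a+1) * Nat.centralBinom a / ((a:ℝ)+1) := by
  have hrec : ((a+1 : ℕ) : ℝ) * (Nat.centralBinom (a+1) : ℝ)
      = 2 * (2*(a:ℝ)+1) * Nat.centralBinom a := by
    exact_mod_cast congrArg (Nat.cast : ℕ → ℝ) (Nat.succ_mul_centralBinom_succ a)
  rw [eq_div_iff (by positivity : ((a:ℝ)+1) ≠ 0)]
  push_cast at hrec
  linarith [hrec]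

lemma cb_lower : ∀ a : ℕ, (4:ℝ)^a ≤ Real.sqrt (4*a+1) * Nat.centralBinom a := by
  intro a
  induction a with
  | zero => simp [Nat.centralBinom]
  | succ a ih =>
    have hCpos : (0:ℝ) < Nat.centralBinom a := by exact_mod_cast Nat.centralBinom_pos a
    set s := Real.sqrt (4*a+1) with hs
    set t := Real.sqrt (4*(a+1:ℕ)+1) with ht
    have hs0 : 0 ≤ s := Real.sqrt_nonneg _
    have ht0 : 0 ≤ t := Real.sqrt_nonneg _
    have hs2 : s^2 = 4*a+1 := Real.sq_sqrt (by positivity)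
    have ht2 : t^2 = 4*(a+1:ℕ)+1 := Real.sq_sqrt (by positivity)
    have key : 4 * s * ((a:ℝ)+1) ≤ 2*(2*(a:ℝ)+1) * t := by
      have hsq : (4*s*((a:ℝ)+1))^2 ≤ (2*(2*(a:ℝ)+1)*t)^2 := by
        have e1 : (4*s*((a:ℝ)+1))^2 = 16*s^2*((a:ℝ)+1)^2 := by ring
        have e2 : (2*(2*(a:ℝ)+1)*t)^2 = 4*(2*(a:ℝ)+1)^2*t^2 := by ring
        rw [e1, e2, hs2, ht2]
        push_cast
        ring_nf
        nlinarith [(Nat.cast_nonneg a : (0:ℝ) ≤ (a:ℝ))]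
      have := Real.sqrt_le_sqrt hsq
      rwa [Real.sqrt_sq (by positivity), Real.sqrt_sq (by positivity)] at this
    rw [cb_rec a]
    have h4 : (4:ℝ)^(a+1) = 4 * 4^a := by ring
    rw [h4]
    calc 4 * (4:ℝ)^a ≤ 4 * (s * Nat.centralBinom a) := by
          have := mul_le_mul_of_nonneg_left ih (by norm_num : (0:ℝ) ≤ 4)
          linarith
      _ ≤ t * (2*(2*(a:ℝ)+1) * Nat.centralBinom a) / ((a:ℝ)+1) := by
          rw [le_div_iff₀ (by positivity : (0:ℝ) < (a:ℝ)+1)]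
          nlinarith [mul_le_mul_of_nonneg_right key hCpos.le]
      _ = t * (2*(2*(a:ℝ)+1) * Nat.centralBinom a / ((a:ℝ)+1)) := by ring
      _ = _ := by push_cast; ring_nf

lemma cb_upper : ∀ a : ℕ, Real.sqrt (3*a+1) * Nat.centralBinom a ≤ (4:ℝ)^a := by
  intro a
  induction a with
  | zero => simp [Nat.centralBinom]
  | succ a ih =>
    have hCpos : (0:ℝ) < Nat.centralBinom a := by exact_mod_cast Nat.centralBinom_pos a
    set s := Real.sqrt (3*a+1) with hs
    set t := Real.sqrt (3*(a+1:ℕ)+1) with ht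
    have hs0 : 0 ≤ s := Real.sqrt_nonneg _
    have ht0 : 0 ≤ t := Real.sqrt_nonneg _
    have hs2 : s^2 = 3*a+1 := Real.sq_sqrt (by positivity)
    have ht2 : t^2 = 3*(a+1:ℕ)+1 := Real.sq_sqrt (by positivity)
    have key : 2*(2*(a:ℝ)+1) * t ≤ 4 * s * ((a:ℝ)+1) := by
      have hsq : (2*(2*(a:ℝ)+1)*t)^2 ≤ (4*s*((a:ℝ)+1))^2 := by
        have e1 : (4*s*((a:ℝ)+1))^2 = 16*s^2*((a:ℝ)+1)^2 := by ring
        have e2 : (2*(2*(a:ℝ)+1)*t)^2 = 4*(2*(a:ℝ)+1)^2*t^2 := by ring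
        rw [e1, e2, hs2, ht2]
        push_cast
        ring_nf
        nlinarith [(Nat.cast_nonneg a : (0:ℝ) ≤ (a:ℝ))]
      have := Real.sqrt_le_sqrt hsq
      rwa [Real.sqrt_sq (by positivity), Real.sqrt_sq (by positivity)] at this
    rw [cb_rec a]
    have h4 : (4:ℝ)^(a+1) = 4 * 4^a := by ring
    rw [h4]
    calc t * (2*(2*(a:ℝ)+1) * Nat.centralBinom a / ((a:ℝ)+1))
        = t * (2*(2*(a:ℝ)+1) * Nat.centralBinom a) / ((a:ℝ)+1) := by ring
      _ ≤ 4 * (s * Nat.centralBinom a) := by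
          rw [div_le_iff₀ (by positivity : (0:ℝ) < (a:ℝ)+1)]
          nlinarith [mul_le_mul_of_nonneg_right key hCpos.le]
      _ ≤ 4 * 4^a := by
          have := mul_le_mul_of_nonneg_left ih (by norm_num : (0:ℝ) ≤ 4)
          linarith

lemma step1 {n : ℕ} (κ : ℝ) (M : Finset (Fin n)) (P : Finset (↥M → Bool))
    (F : (Fin n → Bool) → Bool) (hF : DminusCompletion κ M P F)
    (ha : 1 ≤ n / 4)
    (i : Fin n) (hi : i ∈ M) (g : (Fin n → Bool) → Bool) (hg : ∀ x, g x = g (flipC x i))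
    (S T : Finset (Fin n → Bool))
    (hS : ∀ z ∈ S, wt M z = n / 4 ∧ ¬ ErasedPt κ M z ∧ F z = z i)
    (hT : ∀ x, F x ≠ g x → x ∈ T) :
    S.card ≤ T.card := by
  have hFne : ∀ z : Fin n → Bool, wt M z = n / 4 → F z = z i → F (flipC z i) ≠ F z := by
    intro z hw hFz
    cases hzi : z i with
    | false =>
      have h1 := wt_flipC_false hi hzi
      have h2 : F (flipC z i) = true := hF.2.1 _ (by omega)
      rw [h2, hFz, hzi]
      simp
    | true =>
      have h1 := wt_flipC_true hi hzi
      have h2 : F (flipC z i) = false := hF.1 _ (by omega)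
      rw [h2, hFz, hzi]
      simp
  have hwflip : ∀ z : Fin n → Bool, wt M z = n / 4 → wt M (flipC z i) ≠ n / 4 := by
    intro z hw
    cases hzi : z i with
    | false => have := wt_flipC_false hi hzi; omega
    | true => have := wt_flipC_true hi hzi; omega
  apply Finset.card_le_card_of_injOn (fun z => if F z ≠ g z then z else flipC z i)
  · intro z hz
    obtain ⟨hw, -, hFz⟩ := hS z hz
    by_cases hd : F z ≠ g z
    · dsimp only; rw [if_pos hd]; exact hT z hd
    · dsimp only; rw [if_neg hd]
      push_neg at hd
      refine hT _ ?_
      have : g (flipC z i) = F z := by rw [← hg z, hd]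
      rw [this]
      exact hFne z hw hFz
  · intro z hz z' hz' h
    obtain ⟨hw, -, hFz⟩ := hS z (by simpa using hz)
    obtain ⟨hw', -, hFz'⟩ := hS z' (by simpa using hz')
    dsimp only at h
    split_ifs at h with h1 h2 h2
    · exact h
    · exact absurd (h ▸ hw) (hwflip z' hw')
    · exact absurd (h ▸ hw') (hwflip z hw)
    · have := congrArg (fun y => flipC y i) h
      rwa [flipC_flipC, flipC_flipC] at this

lemma step2 {n : ℕ} (κ : ℝ) (M : Finset (Fin n)) (P : Finset (↥M → Bool))
    (F : (Fin n → Bool) → Bool) (hF : DminusCompletion κ M P F)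
    (hn4 : n % 4 = 0) (hM : M.card = n / 2)
    (i : Fin n) (hi : i ∈ M) :
    ∃ (S : Finset (Fin n → Bool)) (W : ℕ),
      (∀ z ∈ S, wt M z = n / 4 ∧ ¬ ErasedPt κ M z ∧ F z = z i) ∧
      Nat.centralBinom (n / 4) * W ≤ S.card ∧
      2 ^ (2 * (n / 4)) ≤ 2 * W + (2 * ⌈(n:ℝ)^κ⌉₊ + 1) * Nat.centralBinom (n / 4) := by
  classical
  set a := n / 4 with haa
  set r := (n:ℝ) ^ κ with hrr
  set e := Equiv.piEquivPiSubtypeProd (fun j : Fin n => j ∈ M) (fun _ => Bool) with he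
  have h2a : Fintype.card {j : Fin n // ¬ j ∈ M} = 2 * a := by
    rw [card_coe_compl, hM]
    omega
  set b : (↥M → Bool) → Bool := fun u => if u ∈ P then u ⟨i, hi⟩ else !(u ⟨i, hi⟩) with hb
  set ψ : (↥M → Bool) × ({j : Fin n // ¬ j ∈ M} → Bool) → (Fin n → Bool) :=
    fun q => e.symm (q.1, if b q.1 = true then q.2 else negA q.2) with hψ
  -- facts about z = e.symm (u, v)
  have fz1 : ∀ (u : ↥M → Bool) (v : {j : Fin n // ¬ j ∈ M} → Bool) (iM : ↥M),
      e.symm (u, v) iM.1 = u iM := by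
    intro u v iM
    rw [he, Equiv.piEquivPiSubtypeProd_symm_apply, dif_pos iM.2]
  have fz2 : ∀ (u : ↥M → Bool) (v : {j : Fin n // ¬ j ∈ M} → Bool) (jc : {j : Fin n // ¬ j ∈ M}),
      e.symm (u, v) jc.1 = v jc := by
    intro u v jc
    rw [he, Equiv.piEquivPiSubtypeProd_symm_apply, dif_neg jc.2]
  have fwt : ∀ (u : ↥M → Bool) (v : {j : Fin n // ¬ j ∈ M} → Bool),
      wt M (e.symm (u, v)) = wgtA u := by
    intro u v
    rw [wt_eq_subtype, wgtA]
    congr 1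
    apply Finset.filter_congr
    intro iM _
    rw [fz1]
  have fwtc : ∀ (u : ↥M → Bool) (v : {j : Fin n // ¬ j ∈ M} → Bool),
      wt Mᶜ (e.symm (u, v)) = wgtA v := by
    intro u v
    rw [wtc_eq_subtype, wgtA]
    congr 1
    apply Finset.filter_congr
    intro jc _
    rw [fz2]
  have frestr : ∀ (u : ↥M → Bool) (v : {j : Fin n // ¬ j ∈ M} → Bool),
      (fun iM : ↥M => e.symm (u, v) iM.1) = u := by
    intro u v; funext iM; exact fz1 u v iM
  have hcast : ((n : ℝ)) / 4 = ((a : ℕ) : ℝ) := by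
    have : (4 * a : ℕ) = n := by omega
    field_simp
    exact_mod_cast (by omega : n = 4 * a)
  -- main membership fact
  have hmem : ∀ q ∈ (univ.filter fun u : ↥M → Bool => wgtA u = a) ×ˢ (WtA (α := {j : Fin n // ¬ j ∈ M}) a r),
      wt M (ψ q) = n / 4 ∧ ¬ ErasedPt κ M (ψ q) ∧ F (ψ q) = ψ q i := by
    rintro ⟨u, w⟩ hq
    rw [Finset.mem_product, Finset.mem_filter] at hq
    obtain ⟨⟨-, hu⟩, hw⟩ := hq
    set v : {j : Fin n // ¬ j ∈ M} → Bool := if b u = true then w else negA w with hv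
    have hvmem : (b u = true ∧ v ∈ WtA (α := {j : Fin n // ¬ j ∈ M}) a r)
        ∨ (b u = false ∧ v ∈ WfA (α := {j : Fin n // ¬ j ∈ M}) a r) := by
      cases hbu : b u with
      | true => left; exact ⟨rfl, by rw [hv, if_pos hbu]; exact hw⟩
      | false => right; exact ⟨rfl, by rw [hv, if_neg (by simp [hbu])]; exact negA_mem_WfA h2a hw⟩
    have hdec : decide (a < wgtA v) = b u := by
      rcases hvmem with ⟨hbu, hm⟩ | ⟨hbu, hm⟩
      · rw [WtA, Finset.mem_filter] at hm
        simp [hm.2.1, hbu]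
      · rw [WfA, Finset.mem_filter] at hm
        rw [hbu, decide_eq_false (by omega : ¬ a < wgtA v)]
    have hner : r < |(wgtA v : ℝ) - a| := by
      rcases hvmem with ⟨-, hm⟩ | ⟨-, hm⟩
      · rw [WtA, Finset.mem_filter] at hm; exact hm.2.2
      · rw [WfA, Finset.mem_filter] at hm; exact hm.2.2
    have hz : ψ (u, w) = e.symm (u, v) := by rw [hψ]
    refine ⟨?_, ?_, ?_⟩
    · rw [hz, fwt, hu]
    · rw [hz]
      rintro ⟨-, habs⟩
      rw [fwtc, hcast] at habs
      exact absurd habs (not_le.mpr hner)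
    · have hwz : wt M (e.symm (u, v)) = n / 4 := by rw [fwt, hu]
      have hnotE : ¬ ErasedPt κ M (e.symm (u, v)) := by
        rintro ⟨-, habs⟩
        rw [fwtc, hcast] at habs
        exact absurd habs (not_le.mpr hner)
      have hFz := hF.2.2 _ hwz hnotE
      rw [hz, hFz, frestr, MajBar, fwtc]
      have hzi : e.symm (u, v) i = u ⟨i, hi⟩ := fz1 u v ⟨i, hi⟩
      rw [hzi, ← haa, hdec, hb]
      by_cases huP : u ∈ P
      · simp [huP]
      · simp [huP]
  have hinj : Set.InjOn ψ ((univ.filter fun u : ↥M → Bool => wgtA u = a) ×ˢ (WtA (α := {j : Fin n // ¬ j ∈ M}) a r) : Finset _) := by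
    rintro ⟨u, w⟩ hq ⟨u', w'⟩ hq' h
    have hpair : (u, if b u = true then w else negA w) = (u', if b u' = true then w' else negA w') :=
      e.symm.injective h
    have hu : u = u' := congrArg Prod.fst hpair
    have hv := congrArg Prod.snd hpair
    dsimp only at hv
    rw [← hu] at hv
    have hw : w = w' := by
      cases hbu : b u with
      | true => rw [if_pos hbu, if_pos hbu] at hv; exact hv
      | false =>
        rw [if_neg (by simp [hbu]), if_neg (by simp [hbu])] at hv
        have := congrArg negA hv
        rwa [negA_negA, negA_negA] at this
    rw [hu, hw]
  refine ⟨((univ.filter fun u : ↥M → Bool => wgtA u = a) ×ˢ (WtA (α := {j : Fin n // ¬ j ∈ M}) a r)).image ψ,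
    (WtA (α := {j : Fin n // ¬ j ∈ M}) a r).card, ?_, ?_, ?_⟩
  · intro z hz
    obtain ⟨q, hq, rfl⟩ := Finset.mem_image.mp hz
    exact hmem q hq
  · rw [Finset.card_image_of_injOn hinj, Finset.card_product]
    have hUcard : Fintype.card (↥M) = 2 * a := by
      rw [Fintype.card_coe, hM]; omega
    have hPsiU : (univ.filter fun u : ↥M → Bool => wgtA u = a).card = Nat.centralBinom a := by
      have hl := layerA_card (α := ↥M) a
      rw [hUcard] at hl
      convert hl using 1
      congr!
      exact Nat.centralBinom_eq_two_mul_choose a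
    rw [hPsiU]
  · have h2a' : Fintype.card {j : Fin n // ¬ j ∈ M} = 2 * (n / 4) := by
      rw [card_coe_compl, hM]; omega
    exact WtA_count (Real.rpow_nonneg (Nat.cast_nonneg n) κ) h2a'

lemma asymp_bound (κ : ℝ) (hκ0 : 0 < κ) (hκ2 : κ < 1/2) :
    ∃ n₀ : ℕ, ∀ n : ℕ, n₀ ≤ n → 2*(n:ℝ)^κ + 3 ≤ Real.sqrt n / 4 := by
  have hy : (0:ℝ) < 1/2 - κ := by linarith
  have h1 : Filter.Tendsto (fun x : ℝ => x ^ (-(1/2 - κ))) Filter.atTop (nhds 0) :=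
    tendsto_rpow_neg_atTop hy
  have h2 : ∀ᶠ x : ℝ in Filter.atTop, x ^ (-(1/2-κ)) < 1/16 :=
    h1.eventually_lt_const (by norm_num)
  have h3 : ∀ᶠ x : ℝ in Filter.atTop, (576:ℝ) ≤ x := Filter.eventually_ge_atTop 576
  have h4 : ∀ᶠ x : ℝ in Filter.atTop, 2*x^κ + 3 ≤ Real.sqrt x / 4 := by
    filter_upwards [h2, h3] with x hx2 hx3
    have hx0 : (0:ℝ) < x := by linarith
    have hsq : Real.sqrt x = x ^ (1/2 : ℝ) := Real.sqrt_eq_rpow x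
    have hdecomp : x ^ κ = x ^ (1/2:ℝ) * x ^ (-(1/2-κ)) := by
      rw [← Real.rpow_add hx0]
      congr 1
      ring
    have h24 : (24:ℝ) ≤ Real.sqrt x := by
      have : Real.sqrt 576 ≤ Real.sqrt x := Real.sqrt_le_sqrt hx3
      rwa [show (576:ℝ) = 24^2 by norm_num, Real.sqrt_sq (by norm_num : (0:ℝ) ≤ 24)] at this
    have hx12 : (0:ℝ) ≤ x ^ (1/2:ℝ) := Real.rpow_nonneg hx0.le _
    have hneg : (0:ℝ) ≤ x ^ (-(1/2-κ)) := Real.rpow_nonneg hx0.le _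
    calc 2*x^κ + 3 = 2*(x^(1/2:ℝ) * x^(-(1/2-κ))) + 3 := by rw [hdecomp]
      _ ≤ 2*(x^(1/2:ℝ) * (1/16)) + 3 := by nlinarith
      _ ≤ Real.sqrt x/8 + Real.sqrt x/8 := by
          rw [hsq]
          have : (3:ℝ) ≤ x ^ (1/2:ℝ)/8 := by rw [← hsq]; linarith
          linarith
      _ = Real.sqrt x / 4 := by ring
  have h5 : ∀ᶠ m : ℕ in Filter.atTop, 2*(m:ℝ)^κ + 3 ≤ Real.sqrt m / 4 :=
    (tendsto_natCast_atTop_atTop (R := ℝ)).eventually h4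
  exact Filter.eventually_atTop.mp h5
/-- for every completion `F` of a `D⁻` instance, every `i ∈ M`,
and every `g` not depending on coordinate `i`, `F` and `g` differ on at least a
`c/√n` fraction of points. -/
theorem stmt16 : ∀ κ : ℝ, 0 < κ → κ < 1 / 2 →
    ∃ c : ℝ, 0 < c ∧ ∃ n₀ : ℕ, ∀ n : ℕ, n₀ ≤ n → 4 ∣ n →
    ∀ M : Finset (Fin n), M.card = n / 2 →
    ∀ P : Finset (↥M → Bool), P ⊆ PsiSet M → 2 * P.card = (PsiSet M).card →
    ∀ F : (Fin n → Bool) → Bool, DminusCompletion κ M P F →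
    ∀ i ∈ M, ∀ g : (Fin n → Bool) → Bool, (∀ x, g x = g (flipC x i)) →
    c / Real.sqrt n ≤ ((univ.filter fun x => F x ≠ g x).card : ℝ) / 2 ^ n := by
  intro κ hκ0 hκ2
  obtain ⟨n₀', hn₀'⟩ := asymp_bound κ hκ0 hκ2
  refine ⟨1/6, by norm_num, max n₀' 4, ?_⟩
  intro n hn hdvd M hM P _ _ F hF i hi g hg
  have hn' : n₀' ≤ n := le_trans (le_max_left _ _) hn
  have hn4 : 4 ≤ n := le_trans (le_max_right _ _) hn
  have hasym := hn₀' n hn'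
  have hamod : n % 4 = 0 := by omega
  have ha1 : 1 ≤ n / 4 := by omega
  obtain ⟨S, W, hSprop, hScard, hWcount⟩ := step2 κ M P F hF hamod hM i hi
  have hchain : Nat.centralBinom (n / 4) * W ≤ (univ.filter fun x => F x ≠ g x).card :=
    le_trans hScard (step1 κ M P F hF ha1 i hi g hg S _ hSprop
      (fun x h => Finset.mem_filter.mpr ⟨Finset.mem_univ x, h⟩))
  set a := n / 4 with haa
  set B := Nat.centralBinom a with hBB
  set r := (n:ℝ) ^ κ with hrr
  set D := ((univ.filter fun x => F x ≠ g x).card : ℝ) with hDD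
  have hr0 : 0 ≤ r := Real.rpow_nonneg (Nat.cast_nonneg n) κ
  have hD : (B : ℝ) * W ≤ D := by rw [hDD]; exact_mod_cast hchain
  have hWc : ((2:ℝ)) ^ (2*a) ≤ 2 * (W:ℝ) + ((2 * ⌈r⌉₊ + 1 : ℕ) : ℝ) * B := by
    exact_mod_cast hWcount
  clear_value a B D
  clear hWcount hchain hScard hSprop
  have ha1' : 1 ≤ a := by omega
  have ha0R : (0:ℝ) < a := by exact_mod_cast ha1'
  have ha1R : (1:ℝ) ≤ a := by exact_mod_cast ha1'
  have hsqa0 : (0:ℝ) < Real.sqrt a := Real.sqrt_pos.mpr ha0R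
  have hB0 : (0:ℝ) ≤ B := Nat.cast_nonneg B
  have hW0 : (0:ℝ) ≤ W := Nat.cast_nonneg W
  have h4a0 : (0:ℝ) < 4^a := by positivity
  -- lower bound on B
  have hBl : (4:ℝ)^a ≤ 3 * Real.sqrt a * B := by
    have h1 := cb_lower a
    rw [← hBB] at h1
    have h2 : Real.sqrt (4*(a:ℝ)+1) ≤ 3 * Real.sqrt a := by
      have h3 : Real.sqrt (4*(a:ℝ)+1) ≤ Real.sqrt (9*a) := Real.sqrt_le_sqrt (by linarith)
      rwa [show (9:ℝ)*a = 3^2*a by norm_num, Real.sqrt_mul (by positivity) _,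
        Real.sqrt_sq (by norm_num : (0:ℝ) ≤ 3)] at h3
    calc (4:ℝ)^a ≤ Real.sqrt (4*a+1) * B := h1
      _ ≤ 3 * Real.sqrt a * B := mul_le_mul_of_nonneg_right h2 hB0
  -- upper bound on B
  have hBu : (B:ℝ) * Real.sqrt a ≤ 4^a := by
    have h1 := cb_upper a
    rw [← hBB] at h1
    have h2 : Real.sqrt a ≤ Real.sqrt (3*(a:ℝ)+1) := Real.sqrt_le_sqrt (by linarith)
    have h3 : (B:ℝ) * Real.sqrt a ≤ (B:ℝ) * Real.sqrt (3*(a:ℝ)+1) :=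
      mul_le_mul_of_nonneg_left h2 hB0
    calc (B:ℝ) * Real.sqrt a ≤ (B:ℝ) * Real.sqrt (3*(a:ℝ)+1) := h3
      _ = Real.sqrt (3*(a:ℝ)+1) * B := by ring
      _ ≤ 4^a := h1
  have hT : (⌈r⌉₊ : ℝ) ≤ r + 1 := (Nat.ceil_lt_add_one hr0).le
  have hsqn : Real.sqrt n = 2 * Real.sqrt a := by
    have hna : (n:ℝ) = 4 * a := by exact_mod_cast (by omega : n = 4 * a)
    rw [hna, show (4:ℝ)*(a:ℝ) = 2^2*(a:ℝ) by norm_num, Real.sqrt_mul (by positivity) _,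
      Real.sqrt_sq (by norm_num : (0:ℝ) ≤ 2)]
  have hband : ((2*⌈r⌉₊+1 : ℕ) : ℝ) ≤ Real.sqrt a / 2 := by
    rw [hsqn] at hasym
    push_cast
    rw [hrr] at hT ⊢
    linarith
  have h2pow : ((2:ℝ))^(2*a) = 4^a := by rw [pow_mul]; norm_num
  have hWlb : (4:ℝ)^a / 4 ≤ (W : ℝ) := by
    have h1 : ((2*⌈r⌉₊+1 : ℕ):ℝ) * B ≤ (4:ℝ)^a / 2 := by
      calc ((2*⌈r⌉₊+1 : ℕ):ℝ) * B ≤ (Real.sqrt a / 2) * B :=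
            mul_le_mul_of_nonneg_right hband hB0
        _ = (B * Real.sqrt a) / 2 := by ring
        _ ≤ (4:ℝ)^a / 2 := by linarith
    rw [h2pow] at hWc
    linarith
  -- final computation
  have hsqn0 : (0:ℝ) < Real.sqrt n := by rw [hsqn]; positivity
  rw [div_le_div_iff₀ hsqn0 (by positivity : (0:ℝ) < 2^n)]
  have h2n : ((2:ℝ))^n = 4^a * 4^a := by
    rw [show n = 4*a by omega, pow_mul, show ((2:ℝ))^4 = 4*4 by norm_num, mul_pow]
  have hBsqa : (4:ℝ)^a / 3 ≤ (B:ℝ) * Real.sqrt a := by linarith [hBl]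
  have hDW : (B:ℝ) * ((4:ℝ)^a/4) ≤ D := by
    refine le_trans ?_ hD
    exact mul_le_mul_of_nonneg_left hWlb hB0
  calc 1/6 * (2:ℝ)^n = (4^a/3) * (4^a/4) * 2 := by rw [h2n]; ring
    _ ≤ ((B:ℝ) * Real.sqrt a) * (4^a/4) * 2 := by
        have := mul_le_mul_of_nonneg_right hBsqa (by positivity : (0:ℝ) ≤ (4:ℝ)^a/4*2)
        calc (4^a/3) * ((4:ℝ)^a/4) * 2 = (4^a/3) * ((4:ℝ)^a/4*2) := by ring
          _ ≤ ((B:ℝ) * Real.sqrt a) * ((4:ℝ)^a/4*2) := this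
          _ = ((B:ℝ) * Real.sqrt a) * (4^a/4) * 2 := by ring
    _ = ((B:ℝ) * (4^a/4)) * (2 * Real.sqrt a) := by ring
    _ ≤ D * (2 * Real.sqrt a) := mul_le_mul_of_nonneg_right hDW (by positivity)
    _ = D * Real.sqrt n := by rw [hsqn]
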